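/- arXiv:1102.1518 — 6 statements merged into one kernel-verified Lean document; each statement's English description precedes it below -/
import Mathlib

section
/- Let a₁, a₂, a₃ ∈ ℝ and consider on the interval J = (max(a₁,a₂,a₃), ∞) the functions f_i(x) = ((x-a_j)(x-a_k))^{1/4}/(x-a_i)^{1/4} (cyclic (i,j,k)) and h(x) = (1/2)((x-a₁)(x-a₂)(x-a₃))^{-1/4}. Then on J: d/dx (f₁f₂) = h·f₃, d/dx (f₁f₃) = h·f₂, and d/dx (f₂f₃) = h·f₁. -/
/-- The BGPP function with denominator `x - a` and numerator factors `x - b`, `x - c`. -/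
noncomputable def bgppF (a b c : ℝ) (x : ℝ) : ℝ :=
  ((x - b) * (x - c)) ^ ((1:ℝ)/4) / (x - a) ^ ((1:ℝ)/4)

/-- h(x) = (1/2)((x-a₁)(x-a₂)(x-a₃))^{-1/4}. -/
noncomputable def bgppH (a₁ a₂ a₃ : ℝ) (x : ℝ) : ℝ :=
  (1/2) * ((x - a₁) * (x - a₂) * (x - a₃)) ^ (-(1:ℝ)/4)

lemma bgppF_mul (a b c x : ℝ) (ha : a < x) (hb : b < x) (hc : c < x) :
    bgppF a b c x * bgppF b c a x = (x - c) ^ ((1:ℝ)/2) := by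
  have pa : 0 < x - a := sub_pos.2 ha
  have pb : 0 < x - b := sub_pos.2 hb
  have pc : 0 < x - c := sub_pos.2 hc
  have ha4 : (x - a) ^ ((1:ℝ)/4) ≠ 0 := (Real.rpow_pos_of_pos pa _).ne'
  have hb4 : (x - b) ^ ((1:ℝ)/4) ≠ 0 := (Real.rpow_pos_of_pos pb _).ne'
  unfold bgppF
  rw [Real.mul_rpow pb.le pc.le, Real.mul_rpow pc.le pa.le,
    show (1:ℝ)/2 = 1/4 + 1/4 by norm_num, Real.rpow_add pc]
  field_simp

lemma bgppH_mul (a b c x : ℝ) (ha : a < x) (hb : b < x) (hc : c < x) :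
    bgppH a b c x * bgppF c a b x = 1/2 * (x - c) ^ ((1:ℝ)/2 - 1) := by
  have pa : 0 < x - a := sub_pos.2 ha
  have pb : 0 < x - b := sub_pos.2 hb
  have pc : 0 < x - c := sub_pos.2 hc
  have ha4 : (x - a) ^ ((1:ℝ)/4) ≠ 0 := (Real.rpow_pos_of_pos pa _).ne'
  have hb4 : (x - b) ^ ((1:ℝ)/4) ≠ 0 := (Real.rpow_pos_of_pos pb _).ne'
  have hc4 : (x - c) ^ ((1:ℝ)/4) ≠ 0 := (Real.rpow_pos_of_pos pc _).ne'
  unfold bgppH bgppF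
  rw [show -(1:ℝ)/4 = -(1/4) by norm_num, Real.rpow_neg (by positivity),
    Real.mul_rpow (by positivity) pc.le, Real.mul_rpow pa.le pb.le,
    show (1:ℝ)/2 - 1 = -(1/4 + 1/4) by norm_num, Real.rpow_neg pc.le,
    Real.rpow_add pc]
  field_simp

lemma bgpp_key (a b c x : ℝ) (ha : a < x) (hb : b < x) (hc : c < x) :
    HasDerivAt (fun y => bgppF a b c y * bgppF b c a y)
      (bgppH a b c x * bgppF c a b x) x := by
  have pc : 0 < x - c := sub_pos.2 hc
  have hd : HasDerivAt (fun y : ℝ => (y - c) ^ ((1:ℝ)/2))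
      (bgppH a b c x * bgppF c a b x) x := by
    have := (Real.hasDerivAt_rpow_const (x := x - c) (p := (1:ℝ)/2)
      (Or.inl pc.ne')).comp x ((hasDerivAt_id x).sub_const c)
    simpa [bgppH_mul a b c x ha hb hc, Function.comp_def] using this
  refine hd.congr_of_eventuallyEq ?_
  filter_upwards [eventually_gt_nhds ha, eventually_gt_nhds hb,
    eventually_gt_nhds hc] with y hya hyb hyc
  exact bgppF_mul a b c y hya hyb hyc

lemma bgppF_swap (a b c : ℝ) : bgppF a b c = bgppF a c b := by
  funext x; unfold bgppF; rw [mul_comm]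

lemma bgppH_swap (a b c x : ℝ) : bgppH a b c x = bgppH a c b x := by
  unfold bgppH; ring_nf

/-- on J = (max(a₁,a₂,a₃),∞) the BGPP functions satisfy
(f₁f₂)' = h f₃, (f₁f₃)' = h f₂, (f₂f₃)' = h f₁. -/
theorem stmt_2 (a₁ a₂ a₃ : ℝ) (x : ℝ) (h1 : a₁ < x) (h2 : a₂ < x) (h3 : a₃ < x) :
    HasDerivAt (fun y => bgppF a₁ a₂ a₃ y * bgppF a₂ a₃ a₁ y)
      (bgppH a₁ a₂ a₃ x * bgppF a₃ a₁ a₂ x) x ∧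
    HasDerivAt (fun y => bgppF a₁ a₂ a₃ y * bgppF a₃ a₁ a₂ y)
      (bgppH a₁ a₂ a₃ x * bgppF a₂ a₃ a₁ x) x ∧
    HasDerivAt (fun y => bgppF a₂ a₃ a₁ y * bgppF a₃ a₁ a₂ y)
      (bgppH a₁ a₂ a₃ x * bgppF a₁ a₂ a₃ x) x := by
  refine ⟨bgpp_key a₁ a₂ a₃ x h1 h2 h3, ?_, ?_⟩
  · have := bgpp_key a₁ a₃ a₂ x h1 h3 h2
    rw [bgppF_swap a₁ a₃ a₂, bgppF_swap a₃ a₂ a₁, bgppF_swap a₂ a₁ a₃,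
      bgppH_swap a₁ a₃ a₂] at this
    exact this
  · have := bgpp_key a₂ a₃ a₁ x h2 h3 h1
    have hH : bgppH a₂ a₃ a₁ x = bgppH a₁ a₂ a₃ x := by unfold bgppH; ring_nf
    rw [hH] at this
    exact this
end

section
/- Let a ∈ ℝ and define on the interval I = {t > 0 : t⁴ > a} the functions f₁(t) = f₂(t) = t/2, f₃(t) = (t⁴ - a)^{1/2}/(2t), and f(t) = (t⁴/(t⁴-a))^{1/2}. Then on I: d/dt(f₁f₂) = f·f₃, d/dt(f₁f₃) = f·f₂, and d/dt(f₂f₃) = f·f₁. -/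
lemma sqrt_ratio (a t : ℝ) (ht : 0 < t) (hta : a < t ^ 4) :
    Real.sqrt (t ^ 4 / (t ^ 4 - a)) = t ^ 2 / Real.sqrt (t ^ 4 - a) := by
  rw [Real.sqrt_div (by positivity)]
  congr 1
  rw [show t ^ 4 = (t ^ 2) ^ 2 by ring, Real.sqrt_sq (by positivity)]

/-- Eguchi–Hanson data f₁ = f₂ = t/2, f₃ = (t⁴-a)^{1/2}/(2t),
f = (t⁴/(t⁴-a))^{1/2} solve (f₁f₂)' = f f₃, (f₁f₃)' = f f₂, (f₂f₃)' = f f₁. -/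
theorem stmt_3 (a : ℝ) (t : ℝ) (ht : 0 < t) (hta : a < t ^ 4) :
    HasDerivAt (fun s => (s / 2) * (s / 2))
      (Real.sqrt (t ^ 4 / (t ^ 4 - a)) * (Real.sqrt (t ^ 4 - a) / (2 * t))) t ∧
    HasDerivAt (fun s => (s / 2) * (Real.sqrt (s ^ 4 - a) / (2 * s)))
      (Real.sqrt (t ^ 4 / (t ^ 4 - a)) * (t / 2)) t ∧
    HasDerivAt (fun s => (s / 2) * (Real.sqrt (s ^ 4 - a) / (2 * s)))
      (Real.sqrt (t ^ 4 / (t ^ 4 - a)) * (t / 2)) t := by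
  have hpos : 0 < t ^ 4 - a := by linarith
  have hsq : 0 < Real.sqrt (t ^ 4 - a) := Real.sqrt_pos.2 hpos
  have hsqsq : Real.sqrt (t ^ 4 - a) * Real.sqrt (t ^ 4 - a) = t ^ 4 - a :=
    Real.mul_self_sqrt hpos.le
  have hrat := sqrt_ratio a t ht hta
  have h1 : HasDerivAt (fun s : ℝ => (s / 2) * (s / 2))
      (Real.sqrt (t ^ 4 / (t ^ 4 - a)) * (Real.sqrt (t ^ 4 - a) / (2 * t))) t := by
    have := ((hasDerivAt_id t).div_const 2).fun_mul ((hasDerivAt_id t).div_const 2)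
    simp only [id] at this
    convert this using 1 <;> try rfl
    rw [hrat]
    field_simp
    ring
  have h2 : HasDerivAt (fun s : ℝ => (s / 2) * (Real.sqrt (s ^ 4 - a) / (2 * s)))
      (Real.sqrt (t ^ 4 / (t ^ 4 - a)) * (t / 2)) t := by
    have hp : HasDerivAt (fun s : ℝ => s ^ 4 - a) (4 * t ^ 3) t := by
      simpa using (hasDerivAt_pow 4 t).sub_const a
    have hs : HasDerivAt (fun s : ℝ => Real.sqrt (s ^ 4 - a))
        (4 * t ^ 3 / (2 * Real.sqrt (t ^ 4 - a))) t := by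
      simpa [mul_comm, div_eq_mul_inv, Function.comp_def] using
        (Real.hasDerivAt_sqrt hpos.ne').comp t hp
    have hd : HasDerivAt (fun s : ℝ => Real.sqrt (s ^ 4 - a) / (2 * s))
        ((4 * t ^ 3 / (2 * Real.sqrt (t ^ 4 - a)) * (2 * t) -
          Real.sqrt (t ^ 4 - a) * 2) / (2 * t) ^ 2) t := by
      simpa using hs.fun_div (by simpa using (hasDerivAt_id t).const_mul 2 :
        HasDerivAt (fun s : ℝ => 2 * s) 2 t) (by positivity : (2:ℝ) * t ≠ 0)
    have := ((hasDerivAt_id t).div_const 2).fun_mul hd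
    simp only [id] at this
    convert this using 1 <;> try rfl
    rw [hrat]
    field_simp
    nlinarith [hsqsq, hsq, ht]
  exact ⟨h1, h2, h2⟩
end

section
/- Let a > 0 and define on the interval I = {t : 0 < t⁴ < a} the functions f₁(t) = f₂(t) = (1/2)(a - t⁴)^{1/4}, f₃(t) = (t²/2)(a - t⁴)^{-1/4}, and f(t) = t(a - t⁴)^{-1/4}. Then on I: d/dt(f₁f₂) = -f·f₃, d/dt(f₁f₃) = f·f₂, and d/dt(f₂f₃) = f·f₁. -/
/-- on 0 < t⁴ < a, the functions f₁ = f₂ = (1/2)(a-t⁴)^{1/4},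
f₃ = (t²/2)(a-t⁴)^{-1/4}, f = t(a-t⁴)^{-1/4} satisfy
(f₁f₂)' = -f f₃, (f₁f₃)' = f f₂, (f₂f₃)' = f f₁. -/
theorem stmt_4 (a : ℝ) (ha : 0 < a) (t : ℝ) (ht : 0 < t) (hta : t ^ 4 < a) :
    HasDerivAt (fun s => ((1/2) * (a - s ^ 4) ^ ((1:ℝ)/4)) * ((1/2) * (a - s ^ 4) ^ ((1:ℝ)/4)))
      (-(t * (a - t ^ 4) ^ (-(1:ℝ)/4) * (t ^ 2 / 2 * (a - t ^ 4) ^ (-(1:ℝ)/4)))) t ∧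
    HasDerivAt (fun s => ((1/2) * (a - s ^ 4) ^ ((1:ℝ)/4)) * (s ^ 2 / 2 * (a - s ^ 4) ^ (-(1:ℝ)/4)))
      (t * (a - t ^ 4) ^ (-(1:ℝ)/4) * ((1/2) * (a - t ^ 4) ^ ((1:ℝ)/4))) t ∧
    HasDerivAt (fun s => ((1/2) * (a - s ^ 4) ^ ((1:ℝ)/4)) * (s ^ 2 / 2 * (a - s ^ 4) ^ (-(1:ℝ)/4)))
      (t * (a - t ^ 4) ^ (-(1:ℝ)/4) * ((1/2) * (a - t ^ 4) ^ ((1:ℝ)/4))) t := by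
  have hu : 0 < a - t ^ 4 := by linarith
  have hopen : IsOpen {s : ℝ | 0 < a - s ^ 4} :=
    isOpen_lt continuous_const (by continuity)
  have hmem : ∀ᶠ s in nhds t, 0 < a - s ^ 4 := hopen.mem_nhds hu
  have hinner : HasDerivAt (fun s : ℝ => a - s ^ 4) (-(4 * t ^ 3)) t := by
    simpa using (hasDerivAt_pow 4 t).const_sub a
  -- first derivative
  have h1 : HasDerivAt (fun s => ((1/2) * (a - s ^ 4) ^ ((1:ℝ)/4)) * ((1/2) * (a - s ^ 4) ^ ((1:ℝ)/4)))
      (-(t * (a - t ^ 4) ^ (-(1:ℝ)/4) * (t ^ 2 / 2 * (a - t ^ 4) ^ (-(1:ℝ)/4)))) t := by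
    have key : HasDerivAt (fun s : ℝ => (1/4) * (a - s ^ 4) ^ ((1:ℝ)/2))
        ((1/4) * (-(4 * t ^ 3) * ((1:ℝ)/2) * (a - t ^ 4) ^ ((1:ℝ)/2 - 1))) t :=
      (hinner.rpow_const (Or.inl hu.ne')).const_mul (1/4)
    have heq : (fun s => ((1/2) * (a - s ^ 4) ^ ((1:ℝ)/4)) * ((1/2) * (a - s ^ 4) ^ ((1:ℝ)/4)))
        =ᶠ[nhds t] (fun s : ℝ => (1/4) * (a - s ^ 4) ^ ((1:ℝ)/2)) := by
      filter_upwards [hmem] with s hs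
      have h4 : (a - s ^ 4) ^ ((1:ℝ)/4) * (a - s ^ 4) ^ ((1:ℝ)/4)
          = (a - s ^ 4) ^ ((1:ℝ)/2) := by
        rw [← Real.rpow_add hs]; norm_num
      linear_combination (1/4 : ℝ) * h4
    have key2 := key.congr_of_eventuallyEq heq
    refine key2.congr_deriv ?_; symm
    have h5 : (a - t ^ 4) ^ (-(1:ℝ)/4) * (a - t ^ 4) ^ (-(1:ℝ)/4)
        = (a - t ^ 4) ^ ((1:ℝ)/2 - 1) := by
      rw [← Real.rpow_add hu]; norm_num
    linear_combination (-(t^3)/2 : ℝ) * h5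
  -- second derivative
  have h2 : HasDerivAt (fun s => ((1/2) * (a - s ^ 4) ^ ((1:ℝ)/4)) * (s ^ 2 / 2 * (a - s ^ 4) ^ (-(1:ℝ)/4)))
      (t * (a - t ^ 4) ^ (-(1:ℝ)/4) * ((1/2) * (a - t ^ 4) ^ ((1:ℝ)/4))) t := by
    have key : HasDerivAt (fun s : ℝ => s ^ 2 / 4) ((2 : ℕ) * t ^ 1 / 4) t :=
      (hasDerivAt_pow 2 t).div_const 4
    have heq : (fun s => ((1/2) * (a - s ^ 4) ^ ((1:ℝ)/4)) * (s ^ 2 / 2 * (a - s ^ 4) ^ (-(1:ℝ)/4)))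
        =ᶠ[nhds t] (fun s : ℝ => s ^ 2 / 4) := by
      filter_upwards [hmem] with s hs
      have h4 : (a - s ^ 4) ^ ((1:ℝ)/4) * (a - s ^ 4) ^ (-(1:ℝ)/4) = 1 := by
        rw [← Real.rpow_add hs]; norm_num
      linear_combination (s ^ 2 / 4 : ℝ) * h4
    have key2 := key.congr_of_eventuallyEq heq
    refine key2.congr_deriv ?_; symm
    have h4 : (a - t ^ 4) ^ (-(1:ℝ)/4) * (a - t ^ 4) ^ ((1:ℝ)/4) = 1 := by
      rw [← Real.rpow_add hu]; norm_num
    push_cast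
    linear_combination (t / 2 : ℝ) * h4
  exact ⟨h1, h2, h2⟩
end

section
/- Let f₁, f₂, f₃ : I → ℝ be differentiable positive functions on an interval I and f : I → ℝ nonvanishing, satisfying (f₁f₂)' = f f₃, (f₁f₃)' = f f₂, (f₂f₃)' = f f₁. Then f₁' = f (f₂² + f₃² - f₁²)/(2 f₂ f₃), f₂' = f (f₃² + f₁² - f₂²)/(2 f₁ f₃), and f₃' = f (f₁² + f₂² - f₃²)/(2 f₁ f₂). -/
/-- the product-form system (f₁f₂)' = f f₃, (f₁f₃)' = f f₂, (f₂f₃)' = f f₁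
implies the BGPP system fᵢ' = f (f_j² + f_k² - f_i²)/(2 f_j f_k). -/
theorem stmt_12 (I : Set ℝ) (hI : IsOpen I) (hIconn : I.OrdConnected)
    (f₁ f₂ f₃ f : ℝ → ℝ)
    (hdf₁ : ∀ t ∈ I, DifferentiableAt ℝ f₁ t)
    (hdf₂ : ∀ t ∈ I, DifferentiableAt ℝ f₂ t)
    (hdf₃ : ∀ t ∈ I, DifferentiableAt ℝ f₃ t)
    (hfne : ∀ t ∈ I, f t ≠ 0)
    (hpos₁ : ∀ t ∈ I, 0 < f₁ t) (hpos₂ : ∀ t ∈ I, 0 < f₂ t) (hpos₃ : ∀ t ∈ I, 0 < f₃ t)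
    (h12 : ∀ t ∈ I, deriv (fun s => f₁ s * f₂ s) t = f t * f₃ t)
    (h13 : ∀ t ∈ I, deriv (fun s => f₁ s * f₃ s) t = f t * f₂ t)
    (h23 : ∀ t ∈ I, deriv (fun s => f₂ s * f₃ s) t = f t * f₁ t) :
    ∀ t ∈ I,
      deriv f₁ t = f t * (f₂ t ^ 2 + f₃ t ^ 2 - f₁ t ^ 2) / (2 * f₂ t * f₃ t) ∧
      deriv f₂ t = f t * (f₃ t ^ 2 + f₁ t ^ 2 - f₂ t ^ 2) / (2 * f₁ t * f₃ t) ∧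
      deriv f₃ t = f t * (f₁ t ^ 2 + f₂ t ^ 2 - f₃ t ^ 2) / (2 * f₁ t * f₂ t) := by
  intro t ht
  have d1 := hdf₁ t ht
  have d2 := hdf₂ t ht
  have d3 := hdf₃ t ht
  have e12 := h12 t ht
  have e13 := h13 t ht
  have e23 := h23 t ht
  rw [deriv_fun_mul d1 d2] at e12
  rw [deriv_fun_mul d1 d3] at e13
  rw [deriv_fun_mul d2 d3] at e23
  have p1 := hpos₁ t ht
  have p2 := hpos₂ t ht
  have p3 := hpos₃ t ht
  refine ⟨?_, ?_, ?_⟩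
  · field_simp
    linear_combination f₃ t * e12 + f₂ t * e13 - f₁ t * e23
  · field_simp
    linear_combination f₃ t * e12 - f₂ t * e13 + f₁ t * e23
  · field_simp
    linear_combination -f₃ t * e12 + f₂ t * e13 + f₁ t * e23
end

section
/- Let t ranging over an interval where t⁴ > max(a⁴, b⁴, c⁴) for real constants a, b, c. Define f₁(t) = ((t⁴-b⁴)(t⁴-c⁴))^{1/4}/(t⁴-a⁴)^{1/4}, f₂(t) = ((t⁴-a⁴)(t⁴-c⁴))^{1/4}/(t⁴-b⁴)^{1/4}, f₃(t) = ((t⁴-a⁴)(t⁴-b⁴))^{1/4}/(t⁴-c⁴)^{1/4}, and f(t) = 2t³/((t⁴-a⁴)(t⁴-b⁴)(t⁴-c⁴))^{1/4}. Then d/dt(f₁f₂) = f f₃, d/dt(f₁f₃) = f f₂, and d/dt(f₂f₃) = f f₁. -/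
private lemma sq_deriv (d t : ℝ) (hd : d ^ 4 < t ^ 4) :
    HasDerivAt (fun s : ℝ => (s ^ 4 - d ^ 4) ^ ((1:ℝ)/2))
      (2 * t ^ 3 / (t ^ 4 - d ^ 4) ^ ((1:ℝ)/2)) t := by
  have hpos : 0 < t ^ 4 - d ^ 4 := by linarith
  have h1 : HasDerivAt (fun s : ℝ => s ^ 4 - d ^ 4) (4 * t ^ 3) t := by
    simpa using (hasDerivAt_pow 4 t).sub_const (d ^ 4)
  have h2 := h1.rpow_const (p := (1:ℝ)/2) (Or.inl hpos.ne')
  convert h2 using 1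
  rw [show (1:ℝ)/2 - 1 = -(1/2) by norm_num, Real.rpow_neg hpos.le]
  have hne : (t ^ 4 - d ^ 4) ^ ((1:ℝ)/2) ≠ 0 := (Real.rpow_pos_of_pos hpos _).ne'
  field_simp
  ring

private lemma half_eq (R : ℝ) (hR : 0 < R) :
    R ^ ((1:ℝ)/2) = R ^ ((1:ℝ)/4) * R ^ ((1:ℝ)/4) := by
  rw [← Real.rpow_add hR]; norm_num

private lemma pt (P Q R : ℝ) (hP : 0 < P) (hQ : 0 < Q) (hR : 0 < R) :
    (Q * R) ^ ((1:ℝ)/4) / P ^ ((1:ℝ)/4) * ((P * R) ^ ((1:ℝ)/4) / Q ^ ((1:ℝ)/4))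
      = R ^ ((1:ℝ)/2) := by
  rw [Real.mul_rpow hQ.le hR.le, Real.mul_rpow hP.le hR.le, half_eq R hR]
  have hPne : P ^ ((1:ℝ)/4) ≠ 0 := (Real.rpow_pos_of_pos hP _).ne'
  have hQne : Q ^ ((1:ℝ)/4) ≠ 0 := (Real.rpow_pos_of_pos hQ _).ne'
  field_simp

private lemma val (t P Q R : ℝ) (hP : 0 < P) (hQ : 0 < Q) (hR : 0 < R) :
    2 * t ^ 3 / (P * Q * R) ^ ((1:ℝ)/4) * ((P * Q) ^ ((1:ℝ)/4) / R ^ ((1:ℝ)/4))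
      = 2 * t ^ 3 / R ^ ((1:ℝ)/2) := by
  rw [Real.mul_rpow (mul_pos hP hQ).le hR.le, Real.mul_rpow hP.le hQ.le, half_eq R hR]
  have hPne : P ^ ((1:ℝ)/4) ≠ 0 := (Real.rpow_pos_of_pos hP _).ne'
  have hQne : Q ^ ((1:ℝ)/4) ≠ 0 := (Real.rpow_pos_of_pos hQ _).ne'
  have hRne : R ^ ((1:ℝ)/4) ≠ 0 := (Real.rpow_pos_of_pos hR _).ne'
  field_simp

/-- the triaxial BGPP Bianchi IX functions
f₁ = ((t⁴-b⁴)(t⁴-c⁴))^{1/4}/(t⁴-a⁴)^{1/4} (etc.) and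
f = 2t³/((t⁴-a⁴)(t⁴-b⁴)(t⁴-c⁴))^{1/4} satisfy
(f₁f₂)' = f f₃, (f₁f₃)' = f f₂, (f₂f₃)' = f f₁. -/
theorem stmt_13 (a b c : ℝ) (t : ℝ) (ht : 0 < t)
    (hta : a ^ 4 < t ^ 4) (htb : b ^ 4 < t ^ 4) (htc : c ^ 4 < t ^ 4) :
    HasDerivAt (fun s => (((s ^ 4 - b ^ 4) * (s ^ 4 - c ^ 4)) ^ ((1:ℝ)/4) / (s ^ 4 - a ^ 4) ^ ((1:ℝ)/4)) *
        (((s ^ 4 - a ^ 4) * (s ^ 4 - c ^ 4)) ^ ((1:ℝ)/4) / (s ^ 4 - b ^ 4) ^ ((1:ℝ)/4)))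
      ((2 * t ^ 3 / ((t ^ 4 - a ^ 4) * (t ^ 4 - b ^ 4) * (t ^ 4 - c ^ 4)) ^ ((1:ℝ)/4)) *
        (((t ^ 4 - a ^ 4) * (t ^ 4 - b ^ 4)) ^ ((1:ℝ)/4) / (t ^ 4 - c ^ 4) ^ ((1:ℝ)/4))) t ∧
    HasDerivAt (fun s => (((s ^ 4 - b ^ 4) * (s ^ 4 - c ^ 4)) ^ ((1:ℝ)/4) / (s ^ 4 - a ^ 4) ^ ((1:ℝ)/4)) *
        (((s ^ 4 - a ^ 4) * (s ^ 4 - b ^ 4)) ^ ((1:ℝ)/4) / (s ^ 4 - c ^ 4) ^ ((1:ℝ)/4)))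
      ((2 * t ^ 3 / ((t ^ 4 - a ^ 4) * (t ^ 4 - b ^ 4) * (t ^ 4 - c ^ 4)) ^ ((1:ℝ)/4)) *
        (((t ^ 4 - a ^ 4) * (t ^ 4 - c ^ 4)) ^ ((1:ℝ)/4) / (t ^ 4 - b ^ 4) ^ ((1:ℝ)/4))) t ∧
    HasDerivAt (fun s => (((s ^ 4 - a ^ 4) * (s ^ 4 - c ^ 4)) ^ ((1:ℝ)/4) / (s ^ 4 - b ^ 4) ^ ((1:ℝ)/4)) *
        (((s ^ 4 - a ^ 4) * (s ^ 4 - b ^ 4)) ^ ((1:ℝ)/4) / (s ^ 4 - c ^ 4) ^ ((1:ℝ)/4)))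
      ((2 * t ^ 3 / ((t ^ 4 - a ^ 4) * (t ^ 4 - b ^ 4) * (t ^ 4 - c ^ 4)) ^ ((1:ℝ)/4)) *
        (((t ^ 4 - b ^ 4) * (t ^ 4 - c ^ 4)) ^ ((1:ℝ)/4) / (t ^ 4 - a ^ 4) ^ ((1:ℝ)/4))) t := by
  have hA : 0 < t ^ 4 - a ^ 4 := by linarith
  have hB : 0 < t ^ 4 - b ^ 4 := by linarith
  have hC : 0 < t ^ 4 - c ^ 4 := by linarith
  have c4 : ContinuousAt (fun s : ℝ => s ^ 4) t := (continuous_pow 4).continuousAt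
  have ea : ∀ᶠ s in nhds t, a ^ 4 < s ^ 4 :=
    (continuousAt_const (y := a ^ 4)).eventually_lt c4 hta
  have eb : ∀ᶠ s in nhds t, b ^ 4 < s ^ 4 :=
    (continuousAt_const (y := b ^ 4)).eventually_lt c4 htb
  have ec : ∀ᶠ s in nhds t, c ^ 4 < s ^ 4 :=
    (continuousAt_const (y := c ^ 4)).eventually_lt c4 htc
  refine ⟨?_, ?_, ?_⟩
  · rw [val t _ _ _ hA hB hC]
    refine (sq_deriv c t htc).congr_of_eventuallyEq ?_
    filter_upwards [ea, eb, ec] with s hsa hsb hsc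
    have hP : 0 < s ^ 4 - a ^ 4 := by linarith
    have hQ : 0 < s ^ 4 - b ^ 4 := by linarith
    have hR : 0 < s ^ 4 - c ^ 4 := by linarith
    exact pt _ _ _ hP hQ hR
  · rw [show (t ^ 4 - a ^ 4) * (t ^ 4 - b ^ 4) * (t ^ 4 - c ^ 4)
        = (t ^ 4 - a ^ 4) * (t ^ 4 - c ^ 4) * (t ^ 4 - b ^ 4) by ring,
      val t _ _ _ hA hC hB]
    refine (sq_deriv b t htb).congr_of_eventuallyEq ?_
    filter_upwards [ea, eb, ec] with s hsa hsb hsc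
    have hP : 0 < s ^ 4 - a ^ 4 := by linarith
    have hQ : 0 < s ^ 4 - b ^ 4 := by linarith
    have hR : 0 < s ^ 4 - c ^ 4 := by linarith
    rw [show (s ^ 4 - b ^ 4) * (s ^ 4 - c ^ 4) = (s ^ 4 - c ^ 4) * (s ^ 4 - b ^ 4) by ring]
    exact pt _ _ _ hP hR hQ
  · rw [show (t ^ 4 - a ^ 4) * (t ^ 4 - b ^ 4) * (t ^ 4 - c ^ 4)
        = (t ^ 4 - b ^ 4) * (t ^ 4 - c ^ 4) * (t ^ 4 - a ^ 4) by ring,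
      val t _ _ _ hB hC hA]
    refine (sq_deriv a t hta).congr_of_eventuallyEq ?_
    filter_upwards [ea, eb, ec] with s hsa hsb hsc
    have hP : 0 < s ^ 4 - a ^ 4 := by linarith
    have hQ : 0 < s ^ 4 - b ^ 4 := by linarith
    have hR : 0 < s ^ 4 - c ^ 4 := by linarith
    rw [show (s ^ 4 - a ^ 4) * (s ^ 4 - c ^ 4) = (s ^ 4 - c ^ 4) * (s ^ 4 - a ^ 4) by ring,
      show (s ^ 4 - a ^ 4) * (s ^ 4 - b ^ 4) = (s ^ 4 - b ^ 4) * (s ^ 4 - a ^ 4) by ring]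
    exact pt _ _ _ hQ hR hP
end

section
/- Let a₁, a₂, a₃ ∈ ℝ with a₂ < a₃, and consider x in the interval (max(a₁,a₂), a₃) with x > a₁, x > a₂. Define f₁(x) = ((x-a₂)(a₃-x))^{1/4}/(x-a₁)^{1/4}, f₂(x) = ((x-a₁)(a₃-x))^{1/4}/(x-a₂)^{1/4}, f₃(x) = ((x-a₁)(x-a₂))^{1/4}/(a₃-x)^{1/4}, and h(x) = (1/2)((x-a₁)(x-a₂)(a₃-x))^{-1/4}. Then d/dx(f₁f₂) = -h·f₃, d/dx(f₁f₃) = h·f₂, and d/dx(f₂f₃) = h·f₁. -/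
private lemma quarter_mul (p q r : ℝ) (hp:0<p) (hq:0<q) (hr:0<r) :
    (q*r)^((1:ℝ)/4)/p^((1:ℝ)/4) * ((p*r)^((1:ℝ)/4)/q^((1:ℝ)/4)) = r^((1:ℝ)/2) := by
  have key : r^((1:ℝ)/4)*r^((1:ℝ)/4) = r^((1:ℝ)/2) := by
    rw [← Real.rpow_add hr]; norm_num
  rw [Real.mul_rpow hq.le hr.le, Real.mul_rpow hp.le hr.le]
  have h1 := (Real.rpow_pos_of_pos hp ((1:ℝ)/4)).ne'
  have h2 := (Real.rpow_pos_of_pos hq ((1:ℝ)/4)).ne'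
  field_simp
  linear_combination key

private lemma quarter_inv (p q r : ℝ) (hp:0<p) (hq:0<q) (hr:0<r) :
    ((p*q*r)^(-(1:ℝ)/4)) * ((p*q)^((1:ℝ)/4)/r^((1:ℝ)/4)) = r^(-(1:ℝ)/2) := by
  have key : r^((1:ℝ)/4)*r^((1:ℝ)/4) = r^((1:ℝ)/2) := by
    rw [← Real.rpow_add hr]; norm_num
  rw [show (-(1:ℝ)/4) = -((1:ℝ)/4) by ring, show (-(1:ℝ)/2) = -((1:ℝ)/2) by ring,
    Real.rpow_neg (by positivity), Real.rpow_neg hr.le,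
    Real.mul_rpow (by positivity) hr.le, Real.mul_rpow hp.le hq.le]
  have h1 := (Real.rpow_pos_of_pos hp ((1:ℝ)/4)).ne'
  have h2 := (Real.rpow_pos_of_pos hq ((1:ℝ)/4)).ne'
  have h3 := (Real.rpow_pos_of_pos hr ((1:ℝ)/4)).ne'
  have h4 := (Real.rpow_pos_of_pos hr ((1:ℝ)/2)).ne'
  field_simp
  have key2 : (r^((1:ℝ)/4))^2 = r^((1:ℝ)/2) := by rw [sq]; exact key
  linear_combination - key2

/-- on the interval a₁, a₂ < x < a₃ the Bianchi VIII functions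
f₁ = ((x-a₂)(a₃-x))^{1/4}/(x-a₁)^{1/4}, f₂ = ((x-a₁)(a₃-x))^{1/4}/(x-a₂)^{1/4},
f₃ = ((x-a₁)(x-a₂))^{1/4}/(a₃-x)^{1/4}, h = (1/2)((x-a₁)(x-a₂)(a₃-x))^{-1/4}
satisfy (f₁f₂)' = -h f₃, (f₁f₃)' = h f₂, (f₂f₃)' = h f₁. -/
theorem stmt_18 (a₁ a₂ a₃ : ℝ) (ha : a₂ < a₃) (x : ℝ)
    (h1 : a₁ < x) (h2 : a₂ < x) (h3 : x < a₃) :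
    HasDerivAt (fun y => (((y - a₂) * (a₃ - y)) ^ ((1:ℝ)/4) / (y - a₁) ^ ((1:ℝ)/4)) *
        (((y - a₁) * (a₃ - y)) ^ ((1:ℝ)/4) / (y - a₂) ^ ((1:ℝ)/4)))
      (-((1/2) * ((x - a₁) * (x - a₂) * (a₃ - x)) ^ (-(1:ℝ)/4) *
        (((x - a₁) * (x - a₂)) ^ ((1:ℝ)/4) / (a₃ - x) ^ ((1:ℝ)/4)))) x ∧
    HasDerivAt (fun y => (((y - a₂) * (a₃ - y)) ^ ((1:ℝ)/4) / (y - a₁) ^ ((1:ℝ)/4)) *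
        (((y - a₁) * (y - a₂)) ^ ((1:ℝ)/4) / (a₃ - y) ^ ((1:ℝ)/4)))
      ((1/2) * ((x - a₁) * (x - a₂) * (a₃ - x)) ^ (-(1:ℝ)/4) *
        (((x - a₁) * (a₃ - x)) ^ ((1:ℝ)/4) / (x - a₂) ^ ((1:ℝ)/4))) x ∧
    HasDerivAt (fun y => (((y - a₁) * (a₃ - y)) ^ ((1:ℝ)/4) / (y - a₂) ^ ((1:ℝ)/4)) *
        (((y - a₁) * (y - a₂)) ^ ((1:ℝ)/4) / (a₃ - y) ^ ((1:ℝ)/4)))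
      ((1/2) * ((x - a₁) * (x - a₂) * (a₃ - x)) ^ (-(1:ℝ)/4) *
        (((x - a₂) * (a₃ - x)) ^ ((1:ℝ)/4) / (x - a₁) ^ ((1:ℝ)/4))) x := by
  have hp : (0:ℝ) < x - a₁ := sub_pos.mpr h1
  have hq : (0:ℝ) < x - a₂ := sub_pos.mpr h2
  have hr : (0:ℝ) < a₃ - x := sub_pos.mpr h3
  have hnb : Set.Ioo (max a₁ a₂) a₃ ∈ nhds x := Ioo_mem_nhds (max_lt h1 h2) h3
  refine ⟨?_, ?_, ?_⟩
  · -- (f₁ f₂)' : function equals (a₃ - y)^(1/2) near x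
    have hE : (fun y => (((y - a₂) * (a₃ - y)) ^ ((1:ℝ)/4) / (y - a₁) ^ ((1:ℝ)/4)) *
        (((y - a₁) * (a₃ - y)) ^ ((1:ℝ)/4) / (y - a₂) ^ ((1:ℝ)/4)))
        =ᶠ[nhds x] (fun y => (a₃ - y) ^ ((1:ℝ)/2)) := by
      filter_upwards [hnb] with y hy
      exact quarter_mul (y - a₁) (y - a₂) (a₃ - y)
        (sub_pos.mpr ((le_max_left a₁ a₂).trans_lt hy.1))
        (sub_pos.mpr ((le_max_right a₁ a₂).trans_lt hy.1)) (sub_pos.mpr hy.2)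
    have hd : HasDerivAt (fun y => (a₃ - y) ^ ((1:ℝ)/2))
        (-1 * ((1:ℝ)/2) * (a₃ - x) ^ ((1:ℝ)/2 - 1)) x :=
      ((hasDerivAt_id x).const_sub a₃).rpow_const (Or.inl hr.ne')
    refine HasDerivAt.congr_of_eventuallyEq ?_ hE
    convert hd using 1
    all_goals try rfl
    rw [show ((1:ℝ)/2 - 1) = -(1:ℝ)/2 by norm_num,
      ← quarter_inv (x - a₁) (x - a₂) (a₃ - x) hp hq hr]
    ring
  · -- (f₁ f₃)' : function equals (y - a₂)^(1/2) near x
    have hE : (fun y => (((y - a₂) * (a₃ - y)) ^ ((1:ℝ)/4) / (y - a₁) ^ ((1:ℝ)/4)) *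
        (((y - a₁) * (y - a₂)) ^ ((1:ℝ)/4) / (a₃ - y) ^ ((1:ℝ)/4)))
        =ᶠ[nhds x] (fun y => (y - a₂) ^ ((1:ℝ)/2)) := by
      filter_upwards [hnb] with y hy
      rw [mul_comm (y - a₂) (a₃ - y)]
      exact quarter_mul (y - a₁) (a₃ - y) (y - a₂)
        (sub_pos.mpr ((le_max_left a₁ a₂).trans_lt hy.1)) (sub_pos.mpr hy.2)
        (sub_pos.mpr ((le_max_right a₁ a₂).trans_lt hy.1))
    have hd : HasDerivAt (fun y => (y - a₂) ^ ((1:ℝ)/2))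
        (1 * ((1:ℝ)/2) * (x - a₂) ^ ((1:ℝ)/2 - 1)) x :=
      ((hasDerivAt_id x).sub_const a₂).rpow_const (Or.inl hq.ne')
    refine HasDerivAt.congr_of_eventuallyEq ?_ hE
    convert hd using 1
    all_goals try rfl
    rw [show ((1:ℝ)/2 - 1) = -(1:ℝ)/2 by norm_num,
      show (x - a₁) * (x - a₂) * (a₃ - x) = (x - a₁) * (a₃ - x) * (x - a₂) by ring,
      ← quarter_inv (x - a₁) (a₃ - x) (x - a₂) hp hr hq]
    ring
  · -- (f₂ f₃)' : function equals (y - a₁)^(1/2) near x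
    have hE : (fun y => (((y - a₁) * (a₃ - y)) ^ ((1:ℝ)/4) / (y - a₂) ^ ((1:ℝ)/4)) *
        (((y - a₁) * (y - a₂)) ^ ((1:ℝ)/4) / (a₃ - y) ^ ((1:ℝ)/4)))
        =ᶠ[nhds x] (fun y => (y - a₁) ^ ((1:ℝ)/2)) := by
      filter_upwards [hnb] with y hy
      rw [mul_comm (y - a₁) (a₃ - y), mul_comm (y - a₁) (y - a₂)]
      exact quarter_mul (y - a₂) (a₃ - y) (y - a₁)
        (sub_pos.mpr ((le_max_right a₁ a₂).trans_lt hy.1)) (sub_pos.mpr hy.2)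
        (sub_pos.mpr ((le_max_left a₁ a₂).trans_lt hy.1))
    have hd : HasDerivAt (fun y => (y - a₁) ^ ((1:ℝ)/2))
        (1 * ((1:ℝ)/2) * (x - a₁) ^ ((1:ℝ)/2 - 1)) x :=
      ((hasDerivAt_id x).sub_const a₁).rpow_const (Or.inl hp.ne')
    refine HasDerivAt.congr_of_eventuallyEq ?_ hE
    convert hd using 1
    all_goals try rfl
    rw [show ((1:ℝ)/2 - 1) = -(1:ℝ)/2 by norm_num,
      show (x - a₁) * (x - a₂) * (a₃ - x) = (x - a₂) * (a₃ - x) * (x - a₁) by ring,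
      ← quarter_inv (x - a₂) (a₃ - x) (x - a₁) hq hr hp]
    ring
end
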